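/- Every monomial P in a product set F^a · F_s^b (a product of a fair and b strongly fair monomials) admits a decomposition P = P_1 ··· P_{a+b} where P_1,...,P_a are fair, P_{a+1},...,P_{a+b} are strongly fair, and consecutive factors do not overlap: ord P_i ≤ lord P_{i+1} for all 1 ≤ i < a+b. -/

import Mathlib

/-- A monomial `x^{(h_0)}⋯x^{(h_ℓ)}` in `k[x,x',x'',…]`, encoded as the
multiset of orders `{h_0, …, h_ℓ}`, is *fair* if its lowest order is at least
its degree minus 1 (vacuously true for the empty multiset, i.e. `1`). -/
def IsFair (P : Multiset ℕ) : Prop := ∀ x ∈ P, Multiset.card P - 1 ≤ x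

/-- A monomial is *strongly fair* if its lowest order is at least its degree. -/
def IsStronglyFair (P : Multiset ℕ) : Prop := ∀ x ∈ P, Multiset.card P ≤ x

namespace FairAux


def Nice (ε : ℕ) (M : Multiset ℕ) : Prop := ∀ x ∈ M, Multiset.card M ≤ x + ε

lemma nice_zero (ε : ℕ) : Nice ε 0 := by intro x hx; simp at hx

lemma exists_min (B : Multiset ℕ) (hB : B ≠ 0) : ∃ w ∈ B, ∀ z ∈ B, w ≤ z := by
  classical
  have hcoe : ((B.sort (· ≤ ·) : List ℕ) : Multiset ℕ) = B := Multiset.sort_eq _ _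
  have hs : (B.sort (· ≤ ·)).Pairwise (· ≤ ·) := Multiset.pairwise_sort _ _
  rcases h : B.sort (· ≤ ·) with _ | ⟨a, t⟩
  · rw [h] at hcoe; exact absurd hcoe.symm hB
  · rw [h] at hcoe hs
    rw [List.pairwise_cons] at hs
    refine ⟨a, ?_, ?_⟩
    · rw [← hcoe]; exact_mod_cast (List.mem_cons_self : a ∈ a :: t)
    · intro z hz
      rw [← hcoe] at hz
      have hz2 : z ∈ a :: t := by exact_mod_cast hz
      rcases List.mem_cons.mp hz2 with rfl | hz'
      · exact le_refl _
      · exact hs.1 _ hz'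

lemma TF {εA εB : ℕ} (hε : εB ≤ εA) {A B : Multiset ℕ} (hA : Nice εA A) (hB : Nice εB B) :
    ∃ A' B', A + B = A' + B' ∧ Nice εA A' ∧ Nice εB B' ∧
      (∀ x ∈ A', ∀ y ∈ B', x ≤ y) ∧ (∀ y ∈ B', ∃ z ∈ B, z ≤ y) := by
  classical
  by_cases hB0 : B = 0
  · exact ⟨A, 0, by simp [hB0], hA, nice_zero _, by simp, by simp⟩
  by_cases hA0 : A = 0
  · exact ⟨0, B, by simp [hA0], nice_zero _, hB, by simp, fun y hy => ⟨y, hy, le_rfl⟩⟩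
  set l := (A + B).sort (· ≤ ·) with hldef
  have hcoe : (l : Multiset ℕ) = A + B := Multiset.sort_eq _ _
  have hs : l.Pairwise (· ≤ ·) := Multiset.pairwise_sort _ _
  have hlne : l ≠ [] := by
    intro h; rw [h] at hcoe
    have : A = 0 := by
      have h2 := hcoe.symm
      simp only [Multiset.coe_nil] at h2
      have hc : Multiset.card A + Multiset.card B = 0 := by
        rw [← Multiset.card_add, h2]; rfl
      exact Multiset.card_eq_zero.mp (by omega)
    exact hA0 this
  set p := l.head hlne with hpdef
  have hpl : p ∈ l := List.head_mem hlne
  have hpmem : p ∈ A + B := by rw [← hcoe]; exact_mod_cast hpl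
  have hple : ∀ x ∈ l, p ≤ x := by
    intro x hx'
    rcases h : l with _ | ⟨c, t⟩
    · exact absurd h hlne
    · have hp : p = c := by rw [hpdef]; simp [h]
      rw [h] at hx' hs
      rw [List.pairwise_cons] at hs
      rcases List.mem_cons.mp hx' with rfl | hx''
      · exact le_of_eq hp
      · rw [hp]; exact hs.1 _ hx''
  set k := p + εA with hkdef
  -- key fact
  have key : ∀ y ∈ l.drop k,
      (Multiset.card A + Multiset.card B ≤ y + p + εA + εB) ∧ ∃ z ∈ B, z ≤ y := by
    intro y hy
    have hkl : k < l.length := by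
      by_contra h
      push_neg at h
      rw [List.drop_eq_nil_of_le h] at hy
      simp at hy
    have hyl : y ∈ l := List.mem_of_mem_drop hy
    have htakele : ∀ x ∈ l.take k, x ≤ y := by
      intro x hx
      have hs2 := hs
      rw [← List.take_append_drop k l, List.pairwise_append] at hs2
      exact hs2.2.2 x hx y hy
    have hSle : ((l.take k : Multiset ℕ) + {y}) ≤ A + B := by
      rw [← hcoe]
      nth_rewrite 2 [← List.take_append_drop k l]
      rw [← Multiset.coe_add]
      apply add_le_add_right
      rw [Multiset.le_iff_count]
      intro a
      simp only [Multiset.count_singleton]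
      split
      · rename_i h; subst h
        exact Multiset.one_le_count_iff_mem.mpr (by exact_mod_cast hy)
      · exact Nat.zero_le _
    have hcardS : Multiset.card ((l.take k : Multiset ℕ) + {y}) = k + 1 := by
      simp [Multiset.coe_card, List.length_take]
      omega
    rcases Multiset.mem_add.mp hpmem with hpA | hpB
    · -- p ∈ A : card A ≤ p + εA = k
      have hcardA : Multiset.card A ≤ k := hA p hpA
      obtain ⟨w, hwB, hwmin⟩ := exists_min B hB0
      -- claim w ≤ y
      have hwy : w ≤ y := by
        by_contra hcon
        push_neg at hcon   -- y < w
        have hfil : ((l.take k : Multiset ℕ) + {y}) ≤ Multiset.filter (· < w) (A + B) := by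
          rw [Multiset.le_filter]
          refine ⟨hSle, ?_⟩
          intro a ha
          rcases Multiset.mem_add.mp ha with h1 | h2
          · have : a ≤ y := htakele a (by exact_mod_cast h1)
            omega
          · have : a = y := by simpa using h2
            omega
        have hfil2 : Multiset.filter (· < w) (A + B) ≤ A := by
          rw [Multiset.filter_add]
          have : Multiset.filter (· < w) B = 0 := by
            rw [Multiset.filter_eq_nil]
            intro a ha
            have := hwmin a ha
            omega
          rw [this, add_zero]
          exact Multiset.filter_le _ _
        have := Multiset.card_le_card (le_trans hfil hfil2)
        rw [hcardS] at this
        omega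
      have hcardB : Multiset.card B ≤ w + εB := hB w hwB
      exact ⟨by omega, ⟨w, hwB, hwy⟩⟩
    · -- p ∈ B : card B ≤ p + εB
      have hcardB : Multiset.card B ≤ p + εB := hB p hpB
      -- claim card A ≤ y + εA
      have hcardA : Multiset.card A ≤ y + εA := by
        by_contra hcon
        push_neg at hcon
        have hfil : ((l.take k : Multiset ℕ) + {y}) ≤ Multiset.filter (· ≤ y) (A + B) := by
          rw [Multiset.le_filter]
          refine ⟨hSle, ?_⟩
          intro a ha
          rcases Multiset.mem_add.mp ha with h1 | h2
          · exact htakele a (by exact_mod_cast h1)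
          · have : a = y := by simpa using h2
            omega
        have hfil2 : Multiset.filter (· ≤ y) (A + B) ≤ B := by
          rw [Multiset.filter_add]
          have : Multiset.filter (· ≤ y) A = 0 := by
            rw [Multiset.filter_eq_nil]
            intro a ha
            have := hA a ha
            omega
          rw [this, zero_add]
          exact Multiset.filter_le _ _
        have := Multiset.card_le_card (le_trans hfil hfil2)
        rw [hcardS] at this
        omega
      have hpy : p ≤ y := hple y hyl
      exact ⟨by omega, ⟨p, hpB, hpy⟩⟩
  refine ⟨(l.take k : List ℕ), (l.drop k : List ℕ), ?_, ?_, ?_, ?_, ?_⟩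
  · rw [← hcoe, Multiset.coe_add, List.take_append_drop]
  · intro x hx
    have hx' : x ∈ l.take k := by exact_mod_cast hx
    have hxl : x ∈ l := List.mem_of_mem_take hx'
    have hpx : p ≤ x := hple x hxl
    rw [Multiset.coe_card, List.length_take]
    have : min k l.length ≤ k := min_le_left _ _
    omega
  · intro y hy
    have hy' : y ∈ l.drop k := by exact_mod_cast hy
    have hkey := (key y hy').1
    rw [Multiset.coe_card, List.length_drop]
    have hlen : l.length = Multiset.card A + Multiset.card B := by
      rw [← Multiset.coe_card, hcoe, Multiset.card_add]
    omega
  · intro x hx y hy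
    have hx' : x ∈ l.take k := by exact_mod_cast hx
    have hy' : y ∈ l.drop k := by exact_mod_cast hy
    have hs2 := hs
    rw [← List.take_append_drop k l, List.pairwise_append] at hs2
    exact hs2.2.2 x hx' y hy'
  · intro y hy
    have hy' : y ∈ l.drop k := by exact_mod_cast hy
    exact (key y hy').2


lemma mem_list_sum {x : ℕ} : ∀ {l : List (Multiset ℕ)} {M : Multiset ℕ},
    M ∈ l → x ∈ M → x ∈ l.sum := by
  intro l
  induction l with
  | nil => intro M h; simp at h
  | cons a t ih =>
    intro M hM hx
    rcases List.mem_cons.mp hM with rfl | hM'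
    · rw [List.sum_cons]; exact Multiset.mem_add.mpr (Or.inl hx)
    · rw [List.sum_cons]; exact Multiset.mem_add.mpr (Or.inr (ih hM' hx))

lemma peel : ∀ (L : List (ℕ × Multiset ℕ)) (ε : ℕ) (B : Multiset ℕ),
    (∀ p ∈ L, ε ≤ p.1) → (∀ p ∈ L, Nice p.1 p.2) → Nice ε B →
    ∃ (L' : List (ℕ × Multiset ℕ)) (T : Multiset ℕ),
      L'.map Prod.fst = L.map Prod.fst ∧
      (L'.map Prod.snd).sum + T = (L.map Prod.snd).sum + B ∧
      (∀ p ∈ L', Nice p.1 p.2) ∧ Nice ε T ∧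
      (∀ x ∈ (L'.map Prod.snd).sum, ∀ y ∈ T, x ≤ y) := by
  intro L
  induction L with
  | nil =>
    intro ε B _ _ hB
    exact ⟨[], B, rfl, by simp, by simp, hB, by simp⟩
  | cons q L ih =>
    intro ε B hord hnice hB
    obtain ⟨L'', T₀, hmap, hsum, hnice'', hT₀, hord''⟩ :=
      ih ε B (fun p hp => hord p (List.mem_cons_of_mem _ hp))
        (fun p hp => hnice p (List.mem_cons_of_mem _ hp)) hB
    have hq : Nice q.1 q.2 := hnice q List.mem_cons_self
    have hεq : ε ≤ q.1 := hord q List.mem_cons_self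
    obtain ⟨A', T', hAT, hA'nice, hT'nice, hordAT, hTmin⟩ := TF hεq hq hT₀
    refine ⟨(q.1, A') :: L'', T', ?_, ?_, ?_, hT'nice, ?_⟩
    · simp [hmap]
    · simp only [List.map_cons, List.sum_cons]
      calc A' + (List.map Prod.snd L'').sum + T'
          = (A' + T') + (List.map Prod.snd L'').sum := by abel
        _ = (q.2 + T₀) + (List.map Prod.snd L'').sum := by rw [← hAT]
        _ = q.2 + ((List.map Prod.snd L'').sum + T₀) := by abel
        _ = q.2 + ((List.map Prod.snd L).sum + B) := by rw [hsum]
        _ = q.2 + (List.map Prod.snd L).sum + B := by abel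
    · intro p hp
      rcases List.mem_cons.mp hp with rfl | hp'
      · exact hA'nice
      · exact hnice'' p hp'
    · intro x hx y hy
      simp only [List.map_cons, List.sum_cons] at hx
      rcases Multiset.mem_add.mp hx with hx1 | hx2
      · exact hordAT x hx1 y hy
      · obtain ⟨z, hz, hzy⟩ := hTmin y hy
        exact le_trans (hord'' x hx2 z hz) hzy

lemma main : ∀ (n : ℕ) (L : List (ℕ × Multiset ℕ)), L.length = n →
    List.Pairwise (fun p q => q.1 ≤ p.1) L → (∀ p ∈ L, Nice p.1 p.2) →
    ∃ Qs : List (ℕ × Multiset ℕ),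
      Qs.map Prod.fst = L.map Prod.fst ∧
      (Qs.map Prod.snd).sum = (L.map Prod.snd).sum ∧
      (∀ p ∈ Qs, Nice p.1 p.2) ∧
      Qs.Chain' (fun p q => ∀ x ∈ p.2, ∀ y ∈ q.2, x ≤ y) := by
  intro n
  induction n with
  | zero =>
    intro L hlen _ _
    rw [List.length_eq_zero_iff] at hlen
    subst hlen
    exact ⟨[], rfl, rfl, by simp, List.IsChain.nil⟩
  | succ n ihn =>
    intro Lfull hlen hsortfull hnice
    rcases List.eq_nil_or_concat Lfull with rfl | ⟨L, q, hLq⟩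
    · simp at hlen
    rw [List.concat_eq_append] at hLq
    subst hLq
    have hsort : List.Pairwise (fun p q => q.1 ≤ p.1) (L ++ [q]) := hsortfull
    rw [List.pairwise_append] at hsort
    have hord : ∀ p ∈ L, q.1 ≤ p.1 := fun p hp => hsort.2.2 p hp q (List.mem_singleton_self _)
    obtain ⟨L', T, hmap, hsum, hnice', hTnice, hordT⟩ :=
      peel L q.1 q.2 hord (fun p hp => hnice p (List.mem_append_left _ hp))
        (hnice q (List.mem_append_right _ (List.mem_singleton_self _)))
    have hsort' : List.Pairwise (fun p q => q.1 ≤ p.1) L' := by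
      have h1 : List.Pairwise (fun a b => b ≤ a) (L'.map Prod.fst) := by
        rw [hmap]; exact (List.pairwise_map).mpr hsort.1
      exact (List.pairwise_map).mp h1
    have hlen' : L'.length = n := by
      have := congrArg List.length hmap
      simp only [List.length_map] at this
      simp only [List.length_append, List.length_singleton] at hlen
      omega
    obtain ⟨Qs₀, hmap₀, hsum₀, hnice₀, hchain₀⟩ := ihn L' hlen' hsort' hnice'
    refine ⟨Qs₀ ++ [(q.1, T)], ?_, ?_, ?_, ?_⟩

    · simp [hmap₀, hmap]
    · simp only [List.map_append, List.sum_append, List.map_cons, List.sum_cons,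
        List.map_nil, List.sum_nil, add_zero]
      rw [hsum₀, hsum]
    · intro p hp
      rcases List.mem_append.mp hp with hp1 | hp2
      · exact hnice₀ p hp1
      · have : p = (q.1, T) := by simpa using hp2
        rw [this]; exact hTnice
    · unfold List.Chain'
      rw [List.isChain_append]
      refine ⟨hchain₀, List.isChain_singleton _, ?_⟩
      intro pl hpl y hy
      have hplmem : pl ∈ Qs₀ := List.mem_of_mem_getLast? hpl
      have hy' : (q.1, T) = y := by simpa using hy
      subst hy'
      intro x hx z hz
      have hxsum : x ∈ (L'.map Prod.snd).sum := by
        rw [← hsum₀]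
        exact mem_list_sum (List.mem_map_of_mem (f := Prod.snd) hplmem) hx
      exact hordT x hxsum z hz


lemma list_sum_eq_fin_sum {α : Type*} [AddCommMonoid α] (l : List α) (n : ℕ) (h : l.length = n) :
    l.sum = ∑ i : Fin n, l[(i : ℕ)]'(h ▸ i.isLt) := by
  subst h
  conv_lhs => rw [← List.ofFn_getElem (xs := l)]
  rw [List.sum_ofFn]

end FairAux

open FairAux in
theorem fair_decomposition_nonoverlapping (a b : ℕ) (P : Multiset ℕ)
    (f : Fin a → Multiset ℕ) (g : Fin b → Multiset ℕ)
    (hf : ∀ i, IsFair (f i)) (hg : ∀ i, IsStronglyFair (g i))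
    (hP : P = ∑ i, f i + ∑ i, g i) :
    ∃ Q : Fin (a + b) → Multiset ℕ,
      P = ∑ i, Q i ∧
      (∀ i : Fin (a + b), i.val < a → IsFair (Q i)) ∧
      (∀ i : Fin (a + b), a ≤ i.val → IsStronglyFair (Q i)) ∧
      (∀ (i : ℕ) (h1 : i < a + b) (h2 : i + 1 < a + b),
        ∀ x ∈ Q ⟨i, h1⟩, ∀ y ∈ Q ⟨i + 1, h2⟩, x ≤ y) := by
  classical
  set L : List (ℕ × Multiset ℕ) :=
    List.ofFn (fun i : Fin a => ((1 : ℕ), f i)) ++ List.ofFn (fun j : Fin b => ((0 : ℕ), g j))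
    with hLdef
  have hLfst : L.map Prod.fst = List.replicate a 1 ++ List.replicate b 0 := by
    rw [hLdef, List.map_append, List.map_ofFn, List.map_ofFn]
    simp [Function.comp_def, List.ofFn_const]
  have hLlen : L.length = a + b := by
    rw [hLdef]; simp
  have hLsorted : List.Pairwise (fun p q => q.1 ≤ p.1) L := by
    rw [hLdef, List.pairwise_append]
    refine ⟨List.pairwise_ofFn.mpr (fun i j _ => le_refl _),
      List.pairwise_ofFn.mpr (fun i j _ => le_refl _), ?_⟩
    intro p hp q hq
    obtain ⟨j, rfl⟩ := Set.mem_range.mp ((List.mem_ofFn' _ _).mp hq)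
    exact Nat.zero_le _
  have hLnice : ∀ p ∈ L, Nice p.1 p.2 := by
    intro p hp
    rw [hLdef] at hp
    rcases List.mem_append.mp hp with h1 | h2
    · obtain ⟨i, rfl⟩ := Set.mem_range.mp ((List.mem_ofFn' _ _).mp h1)
      intro x hx
      have := hf i x hx
      simp only at this ⊢
      omega
    · obtain ⟨j, rfl⟩ := Set.mem_range.mp ((List.mem_ofFn' _ _).mp h2)
      intro x hx
      have := hg j x hx
      simpa using this
  obtain ⟨Qs, hmap, hsum, hnice, hchain⟩ := FairAux.main (a + b) L hLlen hLsorted hLnice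
  have hQlen : Qs.length = a + b := by
    have := congrArg List.length hmap
    simpa [hLlen] using this
  have hilt : ∀ i : Fin (a + b), (i : ℕ) < Qs.length := fun i => by omega
  refine ⟨fun i => (Qs[(i : ℕ)]'(hilt i)).2, ?_, ?_, ?_, ?_⟩
  · -- sum
    have h1 : P = (L.map Prod.snd).sum := by
      rw [hLdef, List.map_append, List.map_ofFn, List.map_ofFn, List.sum_append]
      rw [hP]
      congr 1
      · rw [List.sum_ofFn]; rfl
      · rw [List.sum_ofFn]; rfl
    have h2 : (Qs.map Prod.snd).length = a + b := by simpa using hQlen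
    rw [h1, ← hsum, list_sum_eq_fin_sum (Qs.map Prod.snd) (a + b) h2]
    apply Finset.sum_congr rfl
    intro i _
    simp [List.getElem_map]
  · -- fair
    intro i hia
    have hn := hnice _ (List.getElem_mem (hilt i))
    have hfst : (Qs[(i : ℕ)]'(hilt i)).1 = 1 := by
      have h1 : (Qs.map Prod.fst)[(i : ℕ)]? = (List.replicate a 1 ++ List.replicate b 0)[(i : ℕ)]? := by
        rw [hmap, hLfst]
      have h2 : (Qs.map Prod.fst)[(i : ℕ)]? = some (Qs[(i : ℕ)]'(hilt i)).1 := by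
        rw [List.getElem?_eq_getElem (by simpa using hilt i)]
        simp [List.getElem_map]
      have h3 : (List.replicate a (1:ℕ) ++ List.replicate b 0)[(i : ℕ)]? = some 1 := by
        rw [List.getElem?_eq_getElem (by simp)]
        rw [List.getElem_append_left (by simpa using hia), List.getElem_replicate]
      exact Option.some.inj (h2.symm.trans (h1.trans h3))
    intro x hx
    show Multiset.card (Qs[(i : ℕ)]'(hilt i)).2 - 1 ≤ x
    have := hn x hx
    rw [hfst] at this
    omega
  · -- strongly fair
    intro i hia
    have hn := hnice _ (List.getElem_mem (hilt i))
    have hfst : (Qs[(i : ℕ)]'(hilt i)).1 = 0 := by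
      have h1 : (Qs.map Prod.fst)[(i : ℕ)]? = (List.replicate a 1 ++ List.replicate b 0)[(i : ℕ)]? := by
        rw [hmap, hLfst]
      have h2 : (Qs.map Prod.fst)[(i : ℕ)]? = some (Qs[(i : ℕ)]'(hilt i)).1 := by
        rw [List.getElem?_eq_getElem (by simpa using hilt i)]
        simp [List.getElem_map]
      have h3 : (List.replicate a (1:ℕ) ++ List.replicate b 0)[(i : ℕ)]? = some 0 := by
        rw [List.getElem?_eq_getElem (by simp)]
        rw [List.getElem_append_right (by simpa using hia), List.getElem_replicate]
      exact Option.some.inj (h2.symm.trans (h1.trans h3))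
    intro x hx
    show Multiset.card (Qs[(i : ℕ)]'(hilt i)).2 ≤ x
    have := hn x hx
    rw [hfst] at this
    omega
  · -- chain
    intro i h1 h2 x hx y hy
    unfold List.Chain' at hchain
    rw [List.isChain_iff_getElem] at hchain
    have := hchain i (by omega)
    exact this x hx y hy
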